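/- For any finite group G, the quotient G/Z(G) is not isomorphic to a generalized quaternion group; that is, for every n ≥ 3, G/Z(G) is not isomorphic to the generalized quaternion group of order 2^n. -/

import Mathlib

/-- Abstract key lemma: if `π : G →* H` is surjective with kernel `Z(G)`, and `H` is covered
by powers of `c` together with cosets `c^k * b`, with `b ^ 2` a power of `c`, then `b ^ 2 = 1`. -/
lemma aux_center_quotient {G H : Type*} [Group G] [Group H] (π : G →* H)
    (hker : π.ker = Subgroup.center G) (hsurj : Function.Surjective π)
    (c b : H)
    (hcov : ∀ h : H, (∃ k : ℕ, h = c ^ k) ∨ (∃ k : ℕ, h = c ^ k * b))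
    (hb2 : ∃ k : ℕ, b ^ 2 = c ^ k) : b ^ 2 = 1 := by
  obtain ⟨g₀, hg₀⟩ := hsurj c
  obtain ⟨b', hb'⟩ := hsurj b
  have hcz : ∀ z ∈ Subgroup.center G, ∀ x : G, Commute x z := fun z hz x =>
    Subgroup.mem_center_iff.mp hz x
  -- every element of `G` mapping to a power of `c` is `g₀ ^ k * z` with `z` central
  have key : ∀ g : G, (∃ k : ℕ, π g = c ^ k) →
      ∃ (k : ℕ) (z : G), z ∈ Subgroup.center G ∧ g = g₀ ^ k * z := by
    intro g ⟨k, hk⟩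
    refine ⟨k, (g₀ ^ k)⁻¹ * g, ?_, by group⟩
    rw [← hker, MonoidHom.mem_ker, map_mul, map_inv, map_pow, hg₀, hk]
    group
  -- `b' ^ 2` is central
  have hb'2 : b' ^ 2 ∈ Subgroup.center G := by
    obtain ⟨k, z, hz, hgz⟩ := key (b' ^ 2) (by rw [map_pow, hb']; exact hb2)
    rw [Subgroup.mem_center_iff]
    intro g
    have hcomm : ∀ j : ℕ, Commute (b' ^ 2) (g₀ ^ j) := by
      intro j
      rw [hgz]
      exact Commute.mul_left (Commute.pow_pow_self g₀ k j) (hcz z hz (g₀ ^ j)).symm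
    rcases hcov (π g) with ⟨j, hj⟩ | ⟨j, hj⟩
    · obtain ⟨j', z', hz', rfl⟩ := key g ⟨j, hj⟩
      exact (((hcomm j').mul_right (hcz z' hz' _)).symm :
        Commute (g₀ ^ j' * z') (b' ^ 2))
    · have : ∃ j' : ℕ, π (g * b'⁻¹) = c ^ j' := by
        refine ⟨j, ?_⟩
        rw [map_mul, map_inv, hb', hj]
        group
      obtain ⟨j', z', hz', hge⟩ := key (g * b'⁻¹) this
      have hg : g = g₀ ^ j' * z' * b' := by
        rw [← hge]; group
      rw [hg]
      exact ((((hcomm j').mul_right (hcz z' hz' _)).mul_right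
        ((Commute.refl b').pow_left 2)).symm :
        Commute (g₀ ^ j' * z' * b') (b' ^ 2))
  have : π (b' ^ 2) = 1 := by
    rw [← hker] at hb'2
    exact hb'2
  rw [map_pow, hb'] at this
  exact this

/-- **Lemma 2.5.** For any finite group `G`, the quotient `G / Z(G)` is
not isomorphic to a generalized quaternion group of order `2 ^ n`, `n ≥ 3`. -/
theorem quotient_center_not_generalized_quaternion (G : Type) [Group G] [Finite G]
    (n : ℕ) (hn : 3 ≤ n) :
    IsEmpty ((G ⧸ Subgroup.center G) ≃* QuaternionGroup (2 ^ (n - 2))) := by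
  constructor
  intro e
  set m : ℕ := 2 ^ (n - 2) with hm
  -- the composed surjection
  set π : G →* QuaternionGroup m :=
    e.toMonoidHom.comp (QuotientGroup.mk' (Subgroup.center G)) with hπ
  have hsurj : Function.Surjective π :=
    e.surjective.comp (QuotientGroup.mk'_surjective _)
  have hker : π.ker = Subgroup.center G := by
    ext g
    simp [hπ, MonoidHom.mem_ker, QuotientGroup.eq_one_iff,
      (MulEquiv.map_eq_one_iff e)]
  have hsq : (QuaternionGroup.xa 0 : QuaternionGroup m) ^ 2 =
      QuaternionGroup.a ((m : ZMod (2 * m))) := by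
    rw [pow_two, QuaternionGroup.xa_mul_xa]
    congr 1
    ring
  have hb2 : (QuaternionGroup.xa 0 : QuaternionGroup m) ^ 2 =
      QuaternionGroup.a (1 : ZMod (2 * m)) ^ ((m : ZMod (2 * m)).val) := by
    rw [QuaternionGroup.a_one_pow, ZMod.natCast_val, ZMod.cast_id]
    exact hsq
  have hcov : ∀ h : QuaternionGroup m,
      (∃ k : ℕ, h = QuaternionGroup.a (1 : ZMod (2 * m)) ^ k) ∨
      (∃ k : ℕ, h = QuaternionGroup.a (1 : ZMod (2 * m)) ^ k * QuaternionGroup.xa 0) := by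
    rintro (i | i)
    · left
      exact ⟨i.val, by rw [QuaternionGroup.a_one_pow, ZMod.natCast_val, ZMod.cast_id]⟩
    · right
      refine ⟨(-i).val, ?_⟩
      rw [QuaternionGroup.a_one_pow, ZMod.natCast_val, ZMod.cast_id,
        QuaternionGroup.a_mul_xa]
      congr 1
      ring
  have := aux_center_quotient π hker hsurj _ _ hcov ⟨_, hb2⟩
  rw [hsq, QuaternionGroup.one_def] at this
  have hmne : ((m : ZMod (2 * m)) : ZMod (2 * m)) ≠ 0 := by
    rw [Ne, ZMod.natCast_eq_zero_iff]
    intro hdvd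
    have hm0 : 0 < m := Nat.pow_pos (by norm_num)
    have := Nat.le_of_dvd hm0 hdvd
    omega
  exact hmne (by injection this)
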